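/- Let H be an induced-hereditary graph property closed under union with K₁. For every graph G and every edge e of G: γ_H(G_e) < γ_H(G) if and only if γ_H(G − e) < γ_H(G). (That is, e is γ_H-S⁻-critical if and only if e is γ_H-ER⁻-critical.) -/

import Mathlib

open SimpleGraph

/-- A graph property: a class of finite simple graphs on arbitrary vertex types. -/
abbrev GraphProp := ∀ (V : Type), SimpleGraph V → Prop

/-- Closure under graph isomorphism. -/
def IsoClosed (P : GraphProp) : Prop :=
  ∀ (V W : Type) (G : SimpleGraph V) (H : SimpleGraph W), Nonempty (G ≃g H) → P V G → P W H

/-- A property is nondegenerate if it contains all edgeless graphs. -/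
def Nondegenerate (P : GraphProp) : Prop :=
  IsoClosed P ∧ ∀ (V : Type), P V ⊥

/-- Closed under induced subgraphs. -/
def InducedHereditary (P : GraphProp) : Prop :=
  IsoClosed P ∧ ∀ (V : Type) (G : SimpleGraph V) (s : Set V), P V G → P s (G.induce s)

/-- Closed under all subgraphs. -/
def Hereditary (P : GraphProp) : Prop :=
  InducedHereditary P ∧ ∀ (V : Type) (G G' : SimpleGraph V), G' ≤ G → P V G → P V G'

/-- The graph `G` together with one new isolated vertex. -/
def addK1 {V : Type} (G : SimpleGraph V) : SimpleGraph (V ⊕ Unit) where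
  Adj a b := ∃ x y, a = Sum.inl x ∧ b = Sum.inl y ∧ G.Adj x y
  symm := by constructor; rintro a b ⟨x, y, rfl, rfl, h⟩; exact ⟨y, x, rfl, rfl, h.symm⟩
  loopless := by constructor; rintro a ⟨x, y, rfl, hy, h⟩; simp only [Sum.inl.injEq] at hy; subst hy; exact G.loopless.irrefl _ h

/-- Closure under disjoint union with `K₁`. -/
def ClosedUnderK1 (P : GraphProp) : Prop :=
  ∀ (V : Type) (G : SimpleGraph V), P V G → P (V ⊕ Unit) (addK1 G)

/-- `S` is a dominating set of `G`. -/
def IsDominating {V : Type} (G : SimpleGraph V) (S : Set V) : Prop :=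
  ∀ v ∉ S, ∃ u ∈ S, G.Adj u v

/-- `S` is a dominating set inducing a subgraph with property `P`. -/
def IsDomPSet (P : GraphProp) {V : Type} (G : SimpleGraph V) (S : Set V) : Prop :=
  IsDominating G S ∧ P S (G.induce S)

/-- The domination number with respect to the property `P`. -/
noncomputable def gammaP (P : GraphProp) {V : Type} [Fintype V] (G : SimpleGraph V) : ℕ :=
  sInf (Set.ncard '' {S : Set V | IsDomPSet P G S})

/-- A minimum dominating `P`-set. -/
def IsGammaSet (P : GraphProp) {V : Type} [Fintype V] (G : SimpleGraph V) (S : Set V) : Prop :=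
  IsDomPSet P G S ∧ S.ncard = gammaP P G

/-- The ordinary domination number. -/
noncomputable def gamma {V : Type} [Fintype V] (G : SimpleGraph V) : ℕ :=
  sInf (Set.ncard '' {S : Set V | IsDominating G S})

/-- The graph obtained from `G` by deleting the edge `uv` and replacing it by the
path `u - x₀ - x₁ - ⋯ - x_{t-1} - v` through `t` new vertices. -/
def subdiv {V : Type} (G : SimpleGraph V) (u v : V) (t : ℕ) : SimpleGraph (V ⊕ Fin t) where
  Adj a b := match a, b with
    | Sum.inl a, Sum.inl b => G.Adj a b ∧ ¬((a = u ∧ b = v) ∨ (a = v ∧ b = u))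
    | Sum.inl a, Sum.inr i => (a = u ∧ (i : ℕ) = 0) ∨ (a = v ∧ (i : ℕ) + 1 = t)
    | Sum.inr i, Sum.inl a => (a = u ∧ (i : ℕ) = 0) ∨ (a = v ∧ (i : ℕ) + 1 = t)
    | Sum.inr i, Sum.inr j => (i : ℕ) + 1 = (j : ℕ) ∨ (j : ℕ) + 1 = (i : ℕ)
  symm := by
    constructor
    rintro (a | i) (b | j) h
    · exact ⟨h.1.symm, fun hc => h.2 (by tauto)⟩
    · exact h
    · exact h
    · tauto
  loopless := by
    constructor
    rintro (a | i) h
    · exact G.loopless.irrefl a h.1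
    · omega

/-- The private neighbour set `pn_G[x, X] = {y : N[y,G] ∩ X = {x}}`. -/
def pn {V : Type} (G : SimpleGraph V) (X : Set V) (x : V) : Set V :=
  {y | insert y (G.neighborSet y) ∩ X = {x}}

/-- The graph `G` with the vertex `v` deleted. -/
abbrev delVert {V : Type} (G : SimpleGraph V) (v : V) : SimpleGraph {w : V // w ≠ v} :=
  G.induce {w : V | w ≠ v}

/-- An independent set. -/
def IsIndep {V : Type} (G : SimpleGraph V) (S : Set V) : Prop :=
  S.Pairwise fun a b => ¬ G.Adj a b

section Helpers

variable {P : GraphProp}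

private def botIso {α β : Type} (e : α ≃ β) : (⊥ : SimpleGraph α) ≃g (⊥ : SimpleGraph β) :=
  ⟨e, by simp⟩

private lemma P_bot (h1 : InducedHereditary P) (h2 : ClosedUnderK1 P)
    (hne : ∃ (W : Type) (G₀ : SimpleGraph W), P W G₀) :
    ∀ (α : Type) [Finite α], P α ⊥ := by
  obtain ⟨W, G₀, hP⟩ := hne
  have hempty : P ↥(∅ : Set W) (G₀.induce ∅) := h1.2 W G₀ ∅ hP
  have hfin : ∀ n : ℕ, P (Fin n) ⊥ := by
    intro n
    induction n with
    | zero =>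
      refine h1.1 _ _ _ _ ⟨⟨Equiv.equivOfIsEmpty _ _, ?_⟩⟩ hempty
      intro a; exact isEmptyElim a
    | succ n ih =>
      have := h2 _ _ ih
      refine h1.1 _ _ _ _ ⟨⟨Fintype.equivOfCardEq (by simp), ?_⟩⟩ this
      intro a b
      simp [addK1]
  intro α _
  have : Fintype α := Fintype.ofFinite α
  exact h1.1 _ _ _ _ ⟨botIso (Fintype.equivFin α).symm⟩ (hfin _)

private lemma subsetP (h1 : InducedHereditary P) {V : Type} (G : SimpleGraph V)
    {S T : Set V} (hTS : T ⊆ S) (h : P ↥S (G.induce S)) : P ↥T (G.induce T) := by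
  have h2 := h1.2 ↥S (G.induce S) {y : ↥S | (y : V) ∈ T} h
  refine h1.1 _ _ _ _ ⟨⟨?_, ?_⟩⟩ h2
  · exact { toFun := fun y => ⟨((y : ↥S) : V), y.2⟩
            invFun := fun t => ⟨⟨(t : V), hTS t.2⟩, t.2⟩
            left_inv := fun y => rfl
            right_inv := fun t => rfl }
  · intro a b; rfl


private lemma gammaP_le {V : Type} [Fintype V] {G : SimpleGraph V} {S : Set V}
    (h : IsDomPSet P G S) : gammaP P G ≤ S.ncard :=
  Nat.sInf_le ⟨S, h, rfl⟩

private lemma exists_min {V : Type} [Fintype V] {G : SimpleGraph V}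
    (hne : ∃ S, IsDomPSet P G S) : ∃ S, IsDomPSet P G S ∧ S.ncard = gammaP P G := by
  obtain ⟨S₀, hS₀⟩ := hne
  have h : gammaP P G ∈ Set.ncard '' {S : Set V | IsDomPSet P G S} :=
    Nat.sInf_mem ⟨S₀.ncard, S₀, hS₀, rfl⟩
  obtain ⟨S, hS, hcard⟩ := h
  exact ⟨S, hS, hcard⟩

private lemma pos_nonempty {V : Type} [Fintype V] {G : SimpleGraph V}
    (h : 0 < gammaP P G) : ∃ S, IsDomPSet P G S := by
  by_contra hc
  push_neg at hc
  have : {S : Set V | IsDomPSet P G S} = ∅ := Set.eq_empty_iff_forall_notMem.2 hc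
  simp [gammaP, this] at h

private lemma exists_domPSet (h1 : InducedHereditary P) (h2 : ClosedUnderK1 P)
    (hne : ∃ (W : Type) (G₀ : SimpleGraph W), P W G₀)
    {V : Type} [Fintype V] (G : SimpleGraph V) : ∃ S, IsDomPSet P G S := by
  classical
  -- take an independent set of maximum size
  obtain ⟨s, hs, hmax⟩ := Finset.exists_max_image
    (Finset.univ.powerset.filter (fun s : Finset V => ∀ a ∈ s, ∀ b ∈ s, ¬ G.Adj a b))
    Finset.card
    ⟨∅, by simp⟩
  simp only [Finset.mem_filter, Finset.mem_powerset] at hs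
  refine ⟨↑s, ?_, ?_⟩
  · intro w hw
    by_contra hc
    push_neg at hc
    have hins : (insert w s) ∈ Finset.univ.powerset.filter
        (fun s : Finset V => ∀ a ∈ s, ∀ b ∈ s, ¬ G.Adj a b) := by
      simp only [Finset.mem_filter, Finset.mem_powerset]
      refine ⟨Finset.subset_univ _, ?_⟩
      intro a ha b hb hadj
      rcases Finset.mem_insert.1 ha with h1 | h1 <;> rcases Finset.mem_insert.1 hb with h2 | h2
      · subst h1; subst h2; exact G.loopless.irrefl _ hadj
      · subst h1; exact hc b (by simpa using h2) hadj.symm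
      · subst h2; exact hc a (by simpa using h1) hadj
      · exact hs.2 a h1 b h2 hadj
    have := hmax _ hins
    have hwn : w ∉ s := by simpa using hw
    have := Finset.card_insert_of_notMem hwn
    omega
  · have : G.induce (↑s : Set V) = ⊥ := by
      ext ⟨a, ha⟩ ⟨b, hb⟩
      simp only [comap_adj, Function.Embedding.coe_subtype, bot_adj, iff_false]
      exact hs.2 a (by simpa using ha) b (by simpa using hb)
    rw [this]
    exact P_bot h1 h2 hne _


section Graphs

variable {V : Type} {G : SimpleGraph V} {u v : V}

private lemma adj_inl {a b : V} :
    (subdiv G u v 1).Adj (Sum.inl a) (Sum.inl b) ↔ (G.deleteEdges {s(u, v)}).Adj a b := by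
  simp only [subdiv, deleteEdges_adj, Set.mem_singleton_iff, Sym2.eq_iff]

private lemma adj_inr_inl {i : Fin 1} {a : V} :
    (subdiv G u v 1).Adj (Sum.inr i) (Sum.inl a) ↔ a = u ∨ a = v := by
  have : (i : ℕ) = 0 := by omega
  simp [subdiv, this]

private lemma adj_inl_inr {i : Fin 1} {a : V} :
    (subdiv G u v 1).Adj (Sum.inl a) (Sum.inr i) ↔ a = u ∨ a = v := by
  have : (i : ℕ) = 0 := by omega
  simp [subdiv, this]

private lemma not_adj_inr {i j : Fin 1} : ¬ (subdiv G u v 1).Adj (Sum.inr i) (Sum.inr j) := by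
  intro h
  simp only [subdiv] at h
  omega

private lemma induce_del_eq {T : Set V} (hT : u ∉ T ∨ v ∉ T) :
    (G.deleteEdges {s(u, v)}).induce T = G.induce T := by
  ext ⟨a, ha⟩ ⟨b, hb⟩
  simp only [comap_adj, Function.Embedding.coe_subtype, deleteEdges_adj,
    Set.mem_singleton_iff, Sym2.eq_iff, and_iff_left_iff_imp]
  rintro _ (⟨rfl, rfl⟩ | ⟨rfl, rfl⟩) <;> tauto

private noncomputable def isoInl (G : SimpleGraph V) (u v : V) (T : Set V) :
    (G.deleteEdges {s(u, v)}).induce T ≃g (subdiv G u v 1).induce (Sum.inl '' T) where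
  toEquiv := Equiv.Set.image Sum.inl T Sum.inl_injective
  map_rel_iff' := by
    intro a b
    simp only [Equiv.Set.image, Equiv.Set.imageOfInjOn, comap_adj,
      Function.Embedding.coe_subtype, Equiv.coe_fn_mk]
    exact adj_inl

private noncomputable def isoInsert (G' : SimpleGraph V) {T : Set V} {w : V} (hw : w ∉ T)
    (hadj : ∀ a ∈ T, ¬ G'.Adj w a) :
    addK1 (G'.induce T) ≃g G'.induce (insert w T) := by
  classical
  refine ⟨⟨fun z => Sum.elim (fun t : ↥T => (⟨(t : V), Set.mem_insert_of_mem _ t.2⟩ : ↥(insert w T)))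
      (fun _ => ⟨w, Set.mem_insert _ _⟩) z,
    fun s => if h : (s : V) ∈ T then Sum.inl ⟨(s : V), h⟩ else Sum.inr (),
    ?_, ?_⟩, ?_⟩
  · rintro (t | u')
    · simp [t.2]
    · simp [hw]
  · rintro ⟨z, hz⟩
    rcases Set.mem_insert_iff.1 hz with rfl | hz'
    · simp [hw]
    · simp [hz']
  · rintro (a | a') (b | b')
    · simp [addK1]
    · simp only [Sum.elim_inl, Sum.elim_inr, comap_adj, Function.Embedding.coe_subtype, addK1]
      constructor
      · intro h; exact absurd h.symm (hadj _ a.2)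
      · rintro ⟨x, y, _, h, _⟩; exact absurd h (by simp)
    · simp only [Sum.elim_inl, Sum.elim_inr, comap_adj, Function.Embedding.coe_subtype, addK1]
      constructor
      · intro h; exact absurd h (hadj _ b.2)
      · rintro ⟨x, y, h, _, _⟩; exact absurd h (by simp)
    · simp only [Sum.elim_inr, comap_adj, Function.Embedding.coe_subtype, addK1]
      constructor
      · intro h; exact absurd h (G'.loopless.irrefl w)
      · rintro ⟨x, y, h, _, _⟩; exact absurd h (by simp)

end Graphs

end Helpers
/-- `e` is `γ_H`-S⁻-critical iff `e` is `γ_H`-ER⁻-critical. -/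
theorem sminus_iff_erminus (P : GraphProp) (h1 : InducedHereditary P) (h2 : ClosedUnderK1 P)
    {V : Type} [Fintype V] (G : SimpleGraph V) (u v : V) (he : G.Adj u v) :
    gammaP P (subdiv G u v 1) < gammaP P G ↔
    gammaP P (G.deleteEdges {s(u, v)}) < gammaP P G := by
  classical
  constructor
  · intro h
    have hGpos : 0 < gammaP P G := lt_of_le_of_lt (Nat.zero_le _) h
    have hPne : ∃ (W : Type) (G₀ : SimpleGraph W), P W G₀ := by
      obtain ⟨S₀, hS₀⟩ := pos_nonempty (P := P) hGpos
      exact ⟨_, _, hS₀.2⟩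
    obtain ⟨S, ⟨hSdom, hSP⟩, hScard⟩ :=
      exists_min (exists_domPSet h1 h2 hPne (subdiv G u v 1))
    have hcard : S.ncard < gammaP P G := hScard ▸ h
    set T : Set V := Sum.inl ⁻¹' S with hTdef
    by_cases hx : Sum.inr 0 ∈ S
    · -- the subdivision vertex is in the minimum set
      have hSx : S = insert (Sum.inr 0) (Sum.inl '' T) := by
        ext z
        rcases z with a | i
        · simp [hTdef]
        · rw [Fin.eq_zero i]
          simp [hx]
      have hxnotmem : (Sum.inr 0 : V ⊕ Fin 1) ∉ Sum.inl '' T := by simp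
      have hcardT : T.ncard + 1 = S.ncard := by
        rw [hSx, Set.ncard_insert_of_notMem hxnotmem (Set.toFinite _),
          Set.ncard_image_of_injective _ Sum.inl_injective]
      have hPT' : P _ ((subdiv G u v 1).induce (Sum.inl '' T)) :=
        subsetP h1 _ (by rw [hSx]; exact Set.subset_insert _ _) hSP
      have hPT : P _ ((G.deleteEdges {s(u, v)}).induce T) :=
        h1.1 _ _ _ _ ⟨(isoInl G u v T).symm⟩ hPT'
      -- domination of vertices other than u, v by T
      have Tdom : ∀ w ∉ T, w ≠ u → w ≠ v → ∃ a ∈ T, (G.deleteEdges {s(u, v)}).Adj a w := by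
        intro w hw hwu hwv
        have hwS : Sum.inl w ∉ S := fun hc => hw hc
        obtain ⟨z, hzS, hadj⟩ := hSdom _ hwS
        rcases z with a | i
        · exact ⟨a, hzS, adj_inl.1 hadj⟩
        · rcases adj_inr_inl.1 hadj with rfl | rfl
          · exact absurd rfl hwu
          · exact absurd rfl hwv
      by_cases hu : u ∈ T ∨ ∃ a ∈ T, (G.deleteEdges {s(u, v)}).Adj a u
        <;> by_cases hv : v ∈ T ∨ ∃ a ∈ T, (G.deleteEdges {s(u, v)}).Adj a v
      · -- both covered: T itself dominates G - e
        have hdom : IsDominating (G.deleteEdges {s(u, v)}) T := by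
          intro w hw
          by_cases hwu : w = u
          · subst hwu
            rcases hu with h' | ⟨a, ha, hadj⟩
            · exact absurd h' hw
            · exact ⟨a, ha, hadj⟩
          · by_cases hwv : w = v
            · subst hwv
              rcases hv with h' | ⟨a, ha, hadj⟩
              · exact absurd h' hw
              · exact ⟨a, ha, hadj⟩
            · exact Tdom w hw hwu hwv
        have hle : gammaP P (G.deleteEdges {s(u, v)}) ≤ T.ncard := gammaP_le ⟨hdom, hPT⟩
        omega
      · -- v uncovered, u covered : use insert v T
        push_neg at hv
        obtain ⟨hvT, hvdom⟩ := hv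
        have hnadj : ∀ a ∈ T, ¬ (G.deleteEdges {s(u, v)}).Adj v a := by
          intro a ha hadj
          exact hvdom a ha hadj.symm
        have hdom : IsDominating (G.deleteEdges {s(u, v)}) (insert v T) := by
          intro w hw
          have hwv : w ≠ v := fun hc => hw (hc ▸ Set.mem_insert _ _)
          have hwT : w ∉ T := fun hc => hw (Set.mem_insert_of_mem _ hc)
          by_cases hwu : w = u
          · subst hwu
            rcases hu with h' | ⟨a, ha, hadj⟩
            · exact absurd h' hwT
            · exact ⟨a, Set.mem_insert_of_mem _ ha, hadj⟩
          · obtain ⟨a, ha, hadj⟩ := Tdom w hwT hwu hwv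
            exact ⟨a, Set.mem_insert_of_mem _ ha, hadj⟩
        have hP : P _ ((G.deleteEdges {s(u, v)}).induce (insert v T)) :=
          h1.1 _ _ _ _ ⟨isoInsert _ hvT hnadj⟩ (h2 _ _ hPT)
        have hle : gammaP P (G.deleteEdges {s(u, v)}) ≤ (insert v T).ncard :=
          gammaP_le ⟨hdom, hP⟩
        have := Set.ncard_insert_le v T
        omega
      · -- u uncovered, v covered : use insert u T
        push_neg at hu
        obtain ⟨huT, hudom⟩ := hu
        have hnadj : ∀ a ∈ T, ¬ (G.deleteEdges {s(u, v)}).Adj u a := by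
          intro a ha hadj
          exact hudom a ha hadj.symm
        have hdom : IsDominating (G.deleteEdges {s(u, v)}) (insert u T) := by
          intro w hw
          have hwu : w ≠ u := fun hc => hw (hc ▸ Set.mem_insert _ _)
          have hwT : w ∉ T := fun hc => hw (Set.mem_insert_of_mem _ hc)
          by_cases hwv : w = v
          · subst hwv
            rcases hv with h' | ⟨a, ha, hadj⟩
            · exact absurd h' hwT
            · exact ⟨a, Set.mem_insert_of_mem _ ha, hadj⟩
          · obtain ⟨a, ha, hadj⟩ := Tdom w hwT hwu hwv
            exact ⟨a, Set.mem_insert_of_mem _ ha, hadj⟩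
        have hP : P _ ((G.deleteEdges {s(u, v)}).induce (insert u T)) :=
          h1.1 _ _ _ _ ⟨isoInsert _ huT hnadj⟩ (h2 _ _ hPT)
        have hle : gammaP P (G.deleteEdges {s(u, v)}) ≤ (insert u T).ncard :=
          gammaP_le ⟨hdom, hP⟩
        have := Set.ncard_insert_le u T
        omega
      · -- neither covered: contradiction via G itself
        exfalso
        push_neg at hu hv
        obtain ⟨huT, hudom⟩ := hu
        obtain ⟨hvT, hvdom⟩ := hv
        have hnadjG : ∀ a ∈ T, ¬ G.Adj u a := by
          intro a ha hadj
          by_cases hav : a = v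
          · exact hvT (hav ▸ ha)
          · refine hudom a ha (deleteEdges_adj.2 ⟨hadj.symm, ?_⟩)
            simp only [Set.mem_singleton_iff, Sym2.eq_iff]
            push_neg
            exact ⟨fun hau => absurd (hau ▸ hadj) (G.loopless.irrefl u), fun hav' => absurd hav' hav⟩
        have hdomG : IsDominating G (insert u T) := by
          intro w hw
          have hwu : w ≠ u := fun hc => hw (hc ▸ Set.mem_insert _ _)
          have hwT : w ∉ T := fun hc => hw (Set.mem_insert_of_mem _ hc)
          by_cases hwv : w = v
          · subst hwv
            exact ⟨u, Set.mem_insert _ _, he⟩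
          · obtain ⟨a, ha, hadj⟩ := Tdom w hwT hwu hwv
            exact ⟨a, Set.mem_insert_of_mem _ ha, (deleteEdges_adj.1 hadj).1⟩
        have hPTG : P _ (G.induce T) := by
          rw [← induce_del_eq (Or.inl huT)]
          exact hPT
        have hPG : P _ (G.induce (insert u T)) :=
          h1.1 _ _ _ _ ⟨isoInsert _ huT hnadjG⟩ (h2 _ _ hPTG)
        have hle : gammaP P G ≤ (insert u T).ncard := gammaP_le ⟨hdomG, hPG⟩
        have := Set.ncard_insert_le u T
        omega
    · -- the subdivision vertex is not in the minimum set
      have hSx : S = Sum.inl '' T := by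
        ext z
        rcases z with a | i
        · simp [hTdef]
        · rw [Fin.eq_zero i]
          simp [hx]
      have hcardT : T.ncard = S.ncard := by
        rw [hSx, Set.ncard_image_of_injective _ Sum.inl_injective]
      have hdom : IsDominating (G.deleteEdges {s(u, v)}) T := by
        intro w hw
        have hwS : Sum.inl w ∉ S := fun hc => hw hc
        obtain ⟨z, hzS, hadj⟩ := hSdom _ hwS
        rcases z with a | i
        · exact ⟨a, hzS, adj_inl.1 hadj⟩
        · exact absurd (Fin.eq_zero i ▸ hzS) hx
      have hPT : P _ ((G.deleteEdges {s(u, v)}).induce T) := by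
        rw [hSx] at hSP
        exact h1.1 _ _ _ _ ⟨(isoInl G u v T).symm⟩ hSP
      have hle : gammaP P (G.deleteEdges {s(u, v)}) ≤ T.ncard := gammaP_le ⟨hdom, hPT⟩
      omega
  · intro h
    have hGpos : 0 < gammaP P G := lt_of_le_of_lt (Nat.zero_le _) h
    have hPne : ∃ (W : Type) (G₀ : SimpleGraph W), P W G₀ := by
      obtain ⟨S₀, hS₀⟩ := pos_nonempty (P := P) hGpos
      exact ⟨_, _, hS₀.2⟩
    obtain ⟨S, ⟨hSdom, hSP⟩, hScard⟩ :=
      exists_min (exists_domPSet h1 h2 hPne (G.deleteEdges {s(u, v)}))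
    have hcard : S.ncard < gammaP P G := hScard ▸ h
    by_cases huv : u ∈ S ∧ v ∈ S
    · have hdom : IsDominating (subdiv G u v 1) (Sum.inl '' S) := by
        rintro (w | i) hw
        · have hwS : w ∉ S := fun hws => hw ⟨w, hws, rfl⟩
          obtain ⟨a, haS, hadj⟩ := hSdom w hwS
          exact ⟨Sum.inl a, ⟨a, haS, rfl⟩, adj_inl.2 hadj⟩
        · exact ⟨Sum.inl u, ⟨u, huv.1, rfl⟩, adj_inl_inr.2 (Or.inl rfl)⟩
      have hP := h1.1 _ _ _ _ ⟨isoInl G u v S⟩ hSP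
      have hle : gammaP P (subdiv G u v 1) ≤ (Sum.inl '' S).ncard := gammaP_le ⟨hdom, hP⟩
      rw [Set.ncard_image_of_injective _ Sum.inl_injective] at hle
      omega
    · exfalso
      have heq : (G.deleteEdges {s(u, v)}).induce S = G.induce S := induce_del_eq (by tauto)
      have hdomG : IsDominating G S := by
        intro w hw
        obtain ⟨a, haS, hadj⟩ := hSdom w hw
        exact ⟨a, haS, (deleteEdges_adj.1 hadj).1⟩
      have : gammaP P G ≤ S.ncard := gammaP_le ⟨hdomG, heq ▸ hSP⟩
      omega
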